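/- Let f(u) be the piecewise function on [0, 4] defined by f(u) = 40 - 4u^3 - 6u^2 - 3u for 0 ≤ u ≤ 1 (and, extending to -1/2 ≤ u ≤ 1, the same formula), and f(u) = (4-u)^3 for 1 ≤ u ≤ 4. Then for every rational b with -1 < b < 1/2, the quantity 1 + b + φ(b)·∫_{-b}^{4} f(u) du equals 9(b+1)(4b^5 - 16b^4 - 50b^3 - 14b^2 + 119b - 140) / (2(4b^3 - 6b^2 + 3b + 40)^2), where φ(b) = -2(b+1)(8b^2 - 17b + 20) / (4b^3 - 6b^2 + 3b + 40)^2. Moreover this quantity is strictly negative for all such b. -/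

import Mathlib

/-- vol(-K_X - uS) for Family 2.28. -/
noncomputable def volF228 (u : ℝ) : ℝ :=
  if u ≤ 1 then 40 - 4*u^3 - 6*u^2 - 3*u else (4 - u)^3

lemma poly_int (a c : ℝ) :
    ∫ u in a..c, (40 - 4*u^3 - 6*u^2 - 3*u) =
      (40*c - c^4 - 2*c^3 - 3/2*c^2) - (40*a - a^4 - 2*a^3 - 3/2*a^2) := by
  apply intervalIntegral.integral_eq_sub_of_hasDerivAt
  · intro u _
    have h := (((hasDerivAt_id u).const_mul (40:ℝ)).sub (hasDerivAt_pow 4 u)).sub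
      ((hasDerivAt_pow 3 u).const_mul 2) |>.sub ((hasDerivAt_pow 2 u).const_mul (3/2))
    convert h using 1
    · funext y; simp only [Pi.sub_apply, id]
    · simp only [Nat.cast_ofNat, show (4:ℕ)-1 = 3 from rfl, show (3:ℕ)-1 = 2 from rfl,
        show (2:ℕ)-1 = 1 from rfl, pow_one]; ring
  · apply Continuous.intervalIntegrable
    continuity

lemma cube_int : ∫ u in (1:ℝ)..4, (4 - u)^3 = 81/4 := by
  have h : ∫ u in (1:ℝ)..4, (4 - u)^3 =
      (fun u : ℝ => -((4-u)^4/4)) 4 - (fun u : ℝ => -((4-u)^4/4)) 1 := by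
    apply intervalIntegral.integral_eq_sub_of_hasDerivAt (f := fun u : ℝ => -((4-u)^4/4))
    · intro u _
      have h1 : HasDerivAt (fun x : ℝ => 4 - x) (-1) u := by
        simpa using (hasDerivAt_id u).const_sub (4:ℝ)
      have h2 := ((h1.pow 4).div_const 4).neg
      convert h2 using 1
      · funext y; simp only [Pi.neg_apply, Pi.pow_apply]
      · simp only [Nat.cast_ofNat, show (4:ℕ)-1 = 3 from rfl]; ring
    · apply Continuous.intervalIntegrable
      continuity
  rw [h]; norm_num

lemma vol_int (a : ℝ) (ha : a ≤ 1) :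
    ∫ u in a..4, volF228 u = a^4 + 2*a^3 + 3/2*a^2 - 40*a + 223/4 := by
  have h1 : ∫ u in a..1, volF228 u = ∫ u in a..1, (40 - 4*u^3 - 6*u^2 - 3*u) := by
    apply intervalIntegral.integral_congr
    intro u hu
    have : u ≤ 1 := by
      rcases Set.mem_uIcc.1 hu with h | h
      · exact h.2
      · linarith [h.2]
    simp [volF228, this]
  have h2 : ∫ u in (1:ℝ)..4, volF228 u = ∫ u in (1:ℝ)..4, (4 - u)^3 := by
    apply intervalIntegral.integral_congr
    intro u hu
    have hu' : 1 ≤ u ∧ u ≤ 4 := by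
      rcases Set.mem_uIcc.1 hu with h | h
      · exact ⟨h.1, h.2⟩
      · constructor <;> linarith [h.1, h.2]
    by_cases h : u ≤ 1
    · have : u = 1 := le_antisymm h hu'.1
      simp [volF228, this]; norm_num
    · simp [volF228, h]
  have hi1 : IntervalIntegrable volF228 MeasureTheory.volume a 1 := by
    apply IntervalIntegrable.congr_ae (f := fun u : ℝ => 40 - 4*u^3 - 6*u^2 - 3*u)
    · apply Continuous.intervalIntegrable; continuity
    · filter_upwards [MeasureTheory.ae_restrict_mem measurableSet_uIoc] with u hu
      have : u ≤ 1 := by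
        rcases Set.mem_uIoc.1 hu with h | h
        · exact h.2
        · linarith [h.2]
      simp [volF228, this]
  have hi2 : IntervalIntegrable volF228 MeasureTheory.volume 1 4 := by
    apply IntervalIntegrable.congr_ae (f := fun u : ℝ => (4 - u)^3)
    · apply Continuous.intervalIntegrable; continuity
    · filter_upwards [MeasureTheory.ae_restrict_mem measurableSet_uIoc] with u hu
      have hu' : 1 < u := by
        rcases Set.mem_uIoc.1 hu with h | h
        · exact h.1
        · linarith [h.1, h.2]
      simp [volF228, not_le.2 hu', hu'.not_ge]
  have hsplit := intervalIntegral.integral_add_adjacent_intervals hi1 hi2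
  rw [h1, h2, poly_int, cube_int] at hsplit
  rw [← hsplit]
  ring

theorem stmt_6 (b : ℚ) (hb1 : -1 < b) (hb2 : b < 1/2) :
    (1 + (b : ℝ) +
      (-2*((b : ℝ) + 1)*(8*(b : ℝ)^2 - 17*(b : ℝ) + 20) /
        (4*(b : ℝ)^3 - 6*(b : ℝ)^2 + 3*(b : ℝ) + 40)^2) *
      ∫ u in (-(b : ℝ))..4, volF228 u) =
      9*((b : ℝ) + 1)*(4*(b : ℝ)^5 - 16*(b : ℝ)^4 - 50*(b : ℝ)^3 - 14*(b : ℝ)^2 +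
        119*(b : ℝ) - 140) / (2*(4*(b : ℝ)^3 - 6*(b : ℝ)^2 + 3*(b : ℝ) + 40)^2) ∧
    (1 + (b : ℝ) +
      (-2*((b : ℝ) + 1)*(8*(b : ℝ)^2 - 17*(b : ℝ) + 20) /
        (4*(b : ℝ)^3 - 6*(b : ℝ)^2 + 3*(b : ℝ) + 40)^2) *
      ∫ u in (-(b : ℝ))..4, volF228 u) < 0 := by
  have hb1' : (-1 : ℝ) < (b : ℝ) := by exact_mod_cast hb1
  have hb2' : (b : ℝ) < 1/2 := by
    rw [show ((1:ℝ)/2) = ((1/2 : ℚ) : ℝ) by norm_num]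
    exact_mod_cast hb2
  set x : ℝ := (b : ℝ)
  have ha : -x ≤ 1 := by linarith
  have hI := vol_int (-x) ha
  have hD : (0:ℝ) < 4*x^3 - 6*x^2 + 3*x + 40 := by nlinarith [sq_nonneg x, sq_nonneg (x+1), sq_nonneg (x-1)]
  have hD' : (4*x^3 - 6*x^2 + 3*x + 40) ≠ 0 := ne_of_gt hD
  have heq : (1 + x +
      (-2*(x + 1)*(8*x^2 - 17*x + 20) / (4*x^3 - 6*x^2 + 3*x + 40)^2) *
      ∫ u in (-x)..4, volF228 u) =
      9*(x + 1)*(4*x^5 - 16*x^4 - 50*x^3 - 14*x^2 + 119*x - 140) /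
        (2*(4*x^3 - 6*x^2 + 3*x + 40)^2) := by
    rw [hI]
    rw [div_mul_eq_mul_div, add_div' _ _ _ (pow_ne_zero 2 hD'),
      div_eq_div_iff (pow_ne_zero 2 hD') (mul_ne_zero two_ne_zero (pow_ne_zero 2 hD'))]
    ring
  refine ⟨heq, ?_⟩
  rw [heq]
  apply div_neg_of_neg_of_pos
  · have hP : 4*x^5 - 16*x^4 - 50*x^3 - 14*x^2 + 119*x - 140 < 0 := by
      nlinarith [sq_nonneg (x+1), sq_nonneg (x-1), sq_nonneg x, sq_nonneg (x^2-1), sq_nonneg (x^2+x), mul_pos (by linarith : (0:ℝ) < x + 1) (by linarith : (0:ℝ) < 1/2 - x)]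
    nlinarith [mul_pos (by linarith : (0:ℝ) < x + 1) (neg_pos.mpr hP)]
  · positivity
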